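/- For every real c, the function s ↦ s·[Φ(−2s) − 1{s < c}] is Lebesgue integrable on ℝ and ∫_{−∞}^{∞} s·[Φ(−2s) − 1{s < c}] ds = 1/8 − c²/2, where Φ is the standard normal cumulative distribution function and 1{s < c} is the indicator of the set {s : s < c}. -/

import Mathlib

open MeasureTheory

/-- The standard normal cumulative distribution function
`Φ(x) = ∫_{−∞}^x (2π)^{−1/2} e^{−u²/2} du`. -/
noncomputable def stdNormalCDF (x : ℝ) : ℝ :=
  ∫ u in Set.Iic x, Real.exp (-u ^ 2 / 2) / Real.sqrt (2 * Real.pi)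

section Aux
open Real

noncomputable def phi (u : ℝ) : ℝ := Real.exp (-u ^ 2 / 2) / Real.sqrt (2 * Real.pi)

lemma phi_eq (u : ℝ) : phi u = Real.exp (-(1/2) * u ^ 2) / Real.sqrt (2 * Real.pi) := by
  unfold phi; ring_nf

lemma phi_nonneg (u : ℝ) : 0 ≤ phi u := by
  unfold phi
  positivity

lemma phi_integrable : Integrable phi := by
  have h := (integrable_exp_neg_mul_sq (by norm_num : (0:ℝ) < 1/2)).div_const (Real.sqrt (2 * Real.pi))
  exact h.congr (Filter.Eventually.of_forall fun u => (phi_eq u).symm)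

lemma phi_integral : ∫ u : ℝ, phi u = 1 := by
  have h : (∫ u : ℝ, phi u) = (∫ u : ℝ, Real.exp (-(1/2) * u ^ 2)) / Real.sqrt (2 * Real.pi) := by
    rw [← integral_div]
    exact integral_congr_ae (Filter.Eventually.of_forall fun u => phi_eq u)
  rw [h, integral_gaussian]
  rw [show Real.pi / (1/2) = 2 * Real.pi by ring]
  rw [div_self (by positivity)]

lemma abs_mul_phi_integrable : Integrable (fun u : ℝ => |u| * phi u) := by
  have h := ((integrable_mul_exp_neg_mul_sq (by norm_num : (0:ℝ) < 1/2)).abs).div_const (Real.sqrt (2 * Real.pi))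
  refine h.congr (Filter.Eventually.of_forall fun u => ?_)
  simp only [phi_eq, abs_mul, abs_of_nonneg (Real.exp_nonneg _), mul_div_assoc]

lemma sq_mul_phi_integrable : Integrable (fun u : ℝ => u ^ 2 * phi u) := by
  have h := (integrable_rpow_mul_exp_neg_mul_sq (by norm_num : (0:ℝ) < 1/2) (by norm_num : (-1:ℝ) < 2)).div_const (Real.sqrt (2 * Real.pi))
  refine h.congr (Filter.Eventually.of_forall fun u => ?_)
  simp only [phi_eq]
  rw [mul_div_assoc]
  norm_cast

lemma exp_neg_sq_half_integrable : Integrable (fun x : ℝ => Real.exp (-x ^ 2 / 2)) := by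
  refine (integrable_exp_neg_mul_sq (by norm_num : (0:ℝ) < 1/2)).congr
    (Filter.Eventually.of_forall fun u => ?_)
  ring_nf

lemma sq_mul_exp_integrable : Integrable (fun x : ℝ => x ^ 2 * Real.exp (-x ^ 2 / 2)) := by
  have h := sq_mul_phi_integrable.mul_const (Real.sqrt (2 * Real.pi))
  refine h.congr (Filter.Eventually.of_forall fun u => ?_)
  simp only [phi]
  field_simp

lemma hasDerivAt_G (x : ℝ) :
    HasDerivAt (fun x : ℝ => -x * Real.exp (-x ^ 2 / 2))
      (x ^ 2 * Real.exp (-x ^ 2 / 2) - Real.exp (-x ^ 2 / 2)) x := by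
  have h1 : HasDerivAt (fun x : ℝ => -x ^ 2 / 2) (-x) x := by
    have : HasDerivAt (fun x : ℝ => -x ^ 2 / 2) (-((2:ℕ) * x ^ (2 - 1)) / 2) x := ((hasDerivAt_pow 2 x).neg).div_const 2
    convert this using 1
    simp
    ring
  have h2 : HasDerivAt (fun x : ℝ => Real.exp (-x ^ 2 / 2)) (-x * Real.exp (-x ^ 2 / 2)) x := by
    simpa [mul_comm, Function.comp_def] using (Real.hasDerivAt_exp (-x ^ 2 / 2)).comp x h1
  have h3 := (hasDerivAt_neg x).mul h2
  refine h3.congr_deriv ?_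
  ring

lemma tendsto_G_cocompact :
    Filter.Tendsto (fun x : ℝ => -x * Real.exp (-x ^ 2 / 2)) (Filter.cocompact ℝ) (nhds 0) := by
  have T := tendsto_rpow_abs_mul_exp_neg_mul_sq_cocompact (by norm_num : (0:ℝ) < 1/2) 1
  refine squeeze_zero_norm (fun x => ?_) T
  rw [Real.rpow_one]
  rw [norm_mul, norm_neg, Real.norm_eq_abs, Real.norm_eq_abs,
    abs_of_nonneg (Real.exp_nonneg _)]
  have : -(1/2) * x ^ 2 = -x ^ 2 / 2 := by ring
  rw [this]

lemma integral_sq_mul_exp : ∫ x : ℝ, x ^ 2 * Real.exp (-x ^ 2 / 2) = Real.sqrt (2 * Real.pi) := by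
  set e : ℝ → ℝ := fun x => Real.exp (-x ^ 2 / 2) with he_def
  set g : ℝ → ℝ := fun x => x ^ 2 * e x - e x with hg_def
  have hg_int : Integrable g := sq_mul_exp_integrable.sub exp_neg_sq_half_integrable
  have htop : Filter.Tendsto (fun x : ℝ => -x * e x) Filter.atTop (nhds 0) :=
    tendsto_G_cocompact.mono_left _root_.atTop_le_cocompact
  have hbot : Filter.Tendsto (fun x : ℝ => -x * e x) Filter.atBot (nhds 0) :=
    tendsto_G_cocompact.mono_left _root_.atBot_le_cocompact
  have hIic : ∫ x in Set.Iic (0:ℝ), g x = 0 := by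
    have := integral_Iic_of_hasDerivAt_of_tendsto
      (f := fun x : ℝ => -x * e x) (f' := g) (a := (0:ℝ)) (m := 0)
      (hasDerivAt_G 0).continuousAt.continuousWithinAt
      (fun x _ => hasDerivAt_G x) hg_int.integrableOn hbot
    simpa using this
  have hIoi : ∫ x in Set.Ioi (0:ℝ), g x = 0 := by
    have := integral_Ioi_of_hasDerivAt_of_tendsto
      (f := fun x : ℝ => -x * e x) (f' := g) (a := (0:ℝ)) (m := 0)
      (hasDerivAt_G 0).continuousAt.continuousWithinAt
      (fun x _ => hasDerivAt_G x) hg_int.integrableOn htop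
    simpa using this
  have htot : ∫ x : ℝ, g x = 0 := by
    rw [← intervalIntegral.integral_Iic_add_Ioi (b := (0:ℝ)) hg_int.integrableOn hg_int.integrableOn,
      hIic, hIoi, add_zero]
  have hsub := integral_sub sq_mul_exp_integrable exp_neg_sq_half_integrable
  have hexp : ∫ x : ℝ, e x = Real.sqrt (2 * Real.pi) := by
    have h : (∫ x : ℝ, e x) = ∫ x : ℝ, Real.exp (-(1/2) * x ^ 2) := by
      refine integral_congr_ae (Filter.Eventually.of_forall fun u => ?_)
      simp only [he_def]; ring_nf
    rw [h, integral_gaussian, show Real.pi / (1/2) = 2 * Real.pi by ring]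
  have : (∫ x : ℝ, x ^ 2 * e x) - ∫ x : ℝ, e x = 0 := by
    rw [← hsub]; exact htot
  have := sub_eq_zero.mp this
  rw [this, hexp]

lemma phi_second_moment : ∫ u : ℝ, u ^ 2 * phi u = 1 := by
  have h : (∫ u : ℝ, u ^ 2 * phi u)
      = (∫ u : ℝ, u ^ 2 * Real.exp (-u ^ 2 / 2)) / Real.sqrt (2 * Real.pi) := by
    rw [← integral_div]
    refine integral_congr_ae (Filter.Eventually.of_forall fun u => ?_)
    simp only [phi]; ring
  rw [h, integral_sq_mul_exp, div_self (by positivity)]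

lemma key_ae (a c : ℝ) :
    (fun s : ℝ => s * ((if s ≤ a then (1:ℝ) else 0) - if s < c then 1 else 0))
      =ᵐ[volume] fun s =>
        if c ≤ a then (Set.Ioc c a).indicator id s else -((Set.Ioc a c).indicator id s) := by
  have hc : (volume : Measure ℝ) {c} = 0 := measure_singleton c
  filter_upwards [compl_mem_ae_iff.mpr hc] with s hs
  simp only [Set.mem_compl_iff, Set.mem_singleton_iff] at hs
  rcases Ne.lt_or_gt hs with h | h <;>
    by_cases hca : c ≤ a <;>
    simp only [hca, if_true, if_false, Set.indicator_apply, Set.mem_Ioc, id] <;>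
    split_ifs <;>
      first
      | ring1
      | (push_neg at *; linarith)
      | (obtain ⟨hc1, hc2⟩ := ‹_ ∧ _›; linarith)
      | (exfalso; apply ‹¬(_ ∧ _)›; refine ⟨?_, ?_⟩ <;> push_neg at * <;> linarith)

lemma key_integrable (a c : ℝ) :
    Integrable (fun s : ℝ => s * ((if s ≤ a then (1:ℝ) else 0) - if s < c then 1 else 0)) := by
  refine Integrable.congr ?_ (key_ae a c).symm
  by_cases hca : c ≤ a <;> simp only [hca, if_true, if_false]
  · exact (continuous_id.integrableOn_Ioc).integrable_indicator measurableSet_Ioc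
  · exact ((continuous_id.integrableOn_Ioc).integrable_indicator measurableSet_Ioc).neg

lemma key_integral (a c : ℝ) :
    ∫ s : ℝ, s * ((if s ≤ a then (1:ℝ) else 0) - if s < c then 1 else 0)
      = (a ^ 2 - c ^ 2) / 2 := by
  rw [integral_congr_ae (key_ae a c)]
  by_cases hca : c ≤ a <;> simp only [hca, if_true, if_false]
  · rw [integral_indicator measurableSet_Ioc]
    have : ∫ s in Set.Ioc c a, id s = ∫ s in c..a, s :=
      (intervalIntegral.integral_of_le hca).symm
    rw [this, integral_id]
  · rw [integral_neg, integral_indicator measurableSet_Ioc]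
    have : ∫ s in Set.Ioc a c, id s = ∫ s in a..c, s :=
      (intervalIntegral.integral_of_le (le_of_not_ge hca)).symm
    rw [this, integral_id]
    ring

lemma key_norm_integral_le (a c : ℝ) :
    ∫ s : ℝ, ‖s * ((if s ≤ a then (1:ℝ) else 0) - if s < c then 1 else 0)‖
      ≤ 2 * (|a| + |c|) ^ 2 := by
  set B := |a| + |c| with hB
  have hB0 : 0 ≤ B := by positivity
  have hbound_int : Integrable ((Set.Ioc (-B) B).indicator fun _ => B) := by
    rw [integrable_indicator_iff measurableSet_Ioc]
    exact integrableOn_const measure_Ioc_lt_top.ne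
  have hmono : (fun s : ℝ => ‖s * ((if s ≤ a then (1:ℝ) else 0) - if s < c then 1 else 0)‖)
      ≤ᵐ[volume] (Set.Ioc (-B) B).indicator fun _ => B := by
    filter_upwards [key_ae a c] with s hs
    rw [hs]
    have ha' := le_abs_self a
    have ha'' := neg_abs_le a
    have hc' := le_abs_self c
    have hc'' := neg_abs_le c
    by_cases hca : c ≤ a <;>
      simp only [hca, if_true, if_false, Set.indicator_apply, Set.mem_Ioc, norm_neg,
        Real.norm_eq_abs, id] <;>
      split_ifs with h1 h2 <;>
      first
      | (simp only [abs_zero]; linarith)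
      | (obtain ⟨h11, h12⟩ := h1; rw [abs_le]; constructor <;> linarith)
      | (exfalso; apply ‹¬(_ ∧ _)›;
         obtain ⟨h11, h12⟩ := ‹_ ∧ _›; refine ⟨by linarith, by linarith⟩)
  have h1 := integral_mono_ae (key_integrable a c).norm hbound_int hmono
  have h2 : ∫ s : ℝ, (Set.Ioc (-B) B).indicator (fun _ => B) s
      = (volume (Set.Ioc (-B) B)).toReal * B := by
    rw [integral_indicator_const _ measurableSet_Ioc]; simp [smul_eq_mul]; left; rw [ENNReal.toReal_ofReal (by linarith), max_eq_left (by linarith)]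
  rw [h2] at h1
  refine h1.trans ?_
  rw [Real.volume_Ioc, ENNReal.toReal_ofReal (by linarith)]
  nlinarith

noncomputable def Fc (c : ℝ) : ℝ × ℝ → ℝ := fun p =>
  (p.1 * ((if p.1 ≤ -p.2 / 2 then (1:ℝ) else 0) - if p.1 < c then 1 else 0)) * phi p.2

lemma phi_measurable : Measurable phi := by
  unfold phi; fun_prop

lemma Fc_measurable (c : ℝ) : Measurable (Fc c) := by
  unfold Fc
  refine Measurable.mul (Measurable.mul measurable_fst (Measurable.sub ?_ ?_)) 
    (phi_measurable.comp measurable_snd)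
  · exact Measurable.ite (measurableSet_le measurable_fst ((measurable_snd.neg).div_const 2))
      measurable_const measurable_const
  · exact Measurable.ite (measurableSet_lt measurable_fst measurable_const)
      measurable_const measurable_const

lemma Fc_section_integrable (c u : ℝ) : Integrable (fun s => Fc c (s, u)) :=
  (key_integrable (-u / 2) c).mul_const (phi u)

lemma Fc_section_integral (c u : ℝ) :
    ∫ s : ℝ, Fc c (s, u) = ((-u / 2) ^ 2 - c ^ 2) / 2 * phi u := by
  simp only [Fc]
  rw [integral_mul_const, key_integral]

lemma Fc_section_norm_integral_le (c u : ℝ) :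
    ∫ s : ℝ, ‖Fc c (s, u)‖ ≤ 2 * (|(-u / 2)| + |c|) ^ 2 * phi u := by
  simp only [Fc]
  have h : (fun s : ℝ => ‖(s * ((if s ≤ -u / 2 then (1:ℝ) else 0) - if s < c then 1 else 0)) * phi u‖)
      = fun s : ℝ => ‖s * ((if s ≤ -u / 2 then (1:ℝ) else 0) - if s < c then 1 else 0)‖ * phi u := by
    funext s
    rw [norm_mul, Real.norm_eq_abs (phi u), abs_of_nonneg (phi_nonneg u)]
  rw [h, integral_mul_const]
  exact mul_le_mul_of_nonneg_right (key_norm_integral_le (-u / 2) c) (phi_nonneg u)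

lemma domin_integrable (c : ℝ) :
    Integrable (fun u : ℝ => 2 * (|(-u / 2)| + |c|) ^ 2 * phi u) := by
  have h := ((sq_mul_phi_integrable.const_mul (1/2)).add
    (abs_mul_phi_integrable.const_mul (2 * |c|))).add (phi_integrable.const_mul (2 * c ^ 2))
  refine h.congr (Filter.Eventually.of_forall fun u => ?_)
  simp only [Pi.add_apply]
  have h1 : |(-u / 2)| = |u| / 2 := by rw [abs_div, abs_neg]; norm_num
  rw [h1]
  have h2 : u ^ 2 = |u| ^ 2 := (sq_abs u).symm
  have h3 : c ^ 2 = |c| ^ 2 := (sq_abs c).symm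
  rw [h2, h3]
  ring

lemma Fc_integrable (c : ℝ) : Integrable (Fc c) (volume.prod volume) := by
  refine (integrable_prod_iff' (Fc_measurable c).aestronglyMeasurable).mpr
    ⟨Filter.Eventually.of_forall fun u => Fc_section_integrable c u, ?_⟩
  have hmeas : AEStronglyMeasurable (fun u : ℝ => ∫ s : ℝ, ‖Fc c (s, u)‖)
      (volume : Measure ℝ) :=
    (((Fc_measurable c).aestronglyMeasurable.norm).prod_swap).integral_prod_right'
  refine Integrable.mono (domin_integrable c) hmeas
    (Filter.Eventually.of_forall fun u => ?_)
  have h1 : 0 ≤ ∫ s : ℝ, ‖Fc c (s, u)‖ :=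
    integral_nonneg fun s => norm_nonneg _
  rw [Real.norm_eq_abs, abs_of_nonneg h1, Real.norm_eq_abs, abs_of_nonneg (mul_nonneg (by positivity) (phi_nonneg u))]
  exact Fc_section_norm_integral_le c u

lemma Fc_inner_integral (c s : ℝ) :
    ∫ u : ℝ, Fc c (s, u) = s * (stdNormalCDF (-(2 * s)) - if s < c then 1 else 0) := by
  have e1 : (fun u : ℝ => Fc c (s, u))
      = fun u : ℝ => s * ((Set.Iic (-(2 * s))).indicator phi u)
          - (s * if s < c then (1:ℝ) else 0) * phi u := by
    funext u
    simp only [Fc]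
    simp only [Set.indicator_apply, Set.mem_Iic]
    split_ifs <;> first | ring1 | (push_neg at *; linarith)
  rw [e1, integral_sub ((phi_integrable.indicator measurableSet_Iic).const_mul s)
      (phi_integrable.const_mul _)]
  rw [integral_const_mul, integral_const_mul, integral_indicator measurableSet_Iic,
    phi_integral]
  have : ∫ u in Set.Iic (-(2 * s)), phi u = stdNormalCDF (-(2 * s)) := rfl
  rw [this]
  ring


end Aux

/-- For every `c ∈ ℝ`, the function `s ↦ s·(Φ(−2s) − 1{s < c})` is
Lebesgue integrable on `ℝ` and `∫ s·(Φ(−2s) − 1{s < c}) ds = 1/8 − c²/2`. -/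
theorem integral_s_mul_Phi_shifted_indicator (c : ℝ) :
    Integrable (fun s : ℝ => s * (stdNormalCDF (-(2 * s)) - if s < c then 1 else 0)) ∧
    (∫ s : ℝ, s * (stdNormalCDF (-(2 * s)) - if s < c then 1 else 0))
      = 1 / 8 - c ^ 2 / 2 := by
  have huncurry : Function.uncurry (fun s u : ℝ => Fc c (s, u)) = Fc c := by
    funext p; simp [Function.uncurry]
  have hswap : Integrable (Function.uncurry fun s u : ℝ => Fc c (s, u)) (volume.prod volume) := by
    rw [huncurry]; exact Fc_integrable c
  have hint : Integrable (fun s : ℝ => s * (stdNormalCDF (-(2 * s)) - if s < c then 1 else 0)) := by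
    have h := (Fc_integrable c).integral_prod_left
    exact h.congr (Filter.Eventually.of_forall fun s => Fc_inner_integral c s)
  refine ⟨hint, ?_⟩
  have h1 : (∫ s : ℝ, s * (stdNormalCDF (-(2 * s)) - if s < c then 1 else 0))
      = ∫ s : ℝ, ∫ u : ℝ, Fc c (s, u) :=
    (integral_congr_ae (Filter.Eventually.of_forall fun s => Fc_inner_integral c s)).symm
  rw [h1, integral_integral_swap hswap]
  have h2 : (∫ u : ℝ, ∫ s : ℝ, Fc c (s, u))
      = ∫ u : ℝ, (1/8) * (u ^ 2 * phi u) - (c ^ 2 / 2) * phi u := by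
    refine integral_congr_ae (Filter.Eventually.of_forall fun u => ?_)
    show (∫ s : ℝ, Fc c (s, u)) = 1 / 8 * (u ^ 2 * phi u) - c ^ 2 / 2 * phi u
    rw [Fc_section_integral]; ring
  rw [h2, integral_sub (sq_mul_phi_integrable.const_mul (1/8))
    (phi_integrable.const_mul (c ^ 2 / 2)), integral_const_mul, integral_const_mul,
    phi_second_moment, phi_integral]
  ring
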